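/- Let n ≥ 1 and let N be a real number with N > 2n + 1. There exists a constant C > 0, depending only on n and N, such that the following holds. For every family of nonnegative coefficients c : ℤⁿ → [0,∞), define f_{j'} : ℝⁿ → [0,∞] by f_{j'}(x) = Σ_{k'∈ℤⁿ} c(k')·1_{[0,1)ⁿ}(2^{j'}·x − k'). Then for all integers j, j' with j < j', every k ∈ ℤⁿ, and every x ∈ ℝⁿ with 2^{j}·x − k ∈ [0,1)ⁿ, one has Σ_{k'∈ℤⁿ} c(k')·(1 + ‖k − 2^{j−j'}·k'‖)^{−N} ≤ C · 2^{n(j'−j)} · M f_{j'}(x). -/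

import Mathlib

open MeasureTheory ENNReal

/-- A point of `ℤⁿ` regarded as a point of Euclidean space `ℝⁿ`. -/
noncomputable def intPt (n : ℕ) (k : Fin n → ℤ) : EuclideanSpace ℝ (Fin n) :=
  (WithLp.equiv 2 (Fin n → ℝ)).symm (fun i => (k i : ℝ))

/-- The unit cube `[0,1)ⁿ` in `ℝⁿ`. -/
def unitCube (n : ℕ) : Set (EuclideanSpace ℝ (Fin n)) :=
  {y | ∀ i, 0 ≤ y i ∧ y i < 1}

/-- The Hardy–Littlewood maximal function of `g : ℝⁿ → [0,∞]`. -/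
noncomputable def maxFn (n : ℕ) (g : EuclideanSpace ℝ (Fin n) → ℝ≥0∞)
    (x : EuclideanSpace ℝ (Fin n)) : ℝ≥0∞ :=
  ⨆ (r : ℝ) (_ : 0 < r), (∫⁻ y in Metric.ball x r, g y) / volume (Metric.ball x r)

/-- The function `f_{j'}(x) = ∑_{k'} c(k') 1_{[0,1)ⁿ}(2^{j'} x - k')`. -/
noncomputable def waveletSum (n : ℕ) (c : (Fin n → ℤ) → NNReal) (j' : ℤ)
    (x : EuclideanSpace ℝ (Fin n)) : ℝ≥0∞ :=
  ∑' k' : Fin n → ℤ,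
    (c k' : ℝ≥0∞) * (unitCube n).indicator 1 ((2 : ℝ) ^ j' • x - intPt n k')

lemma norm_le_sqrt_of_mem_unitCube {n : ℕ} {z : EuclideanSpace ℝ (Fin n)}
    (hz : z ∈ unitCube n) : ‖z‖ ≤ Real.sqrt n := by
  rw [EuclideanSpace.norm_eq]
  apply Real.sqrt_le_sqrt
  calc ∑ i, ‖z i‖ ^ 2 ≤ ∑ _i : Fin n, 1 := by
        apply Finset.sum_le_sum
        intro i _
        have h := hz i
        have : |z i| ≤ 1 := by rw [abs_le]; constructor <;> linarith [h.1, h.2]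
        calc ‖z i‖ ^ 2 = |z i| ^ 2 := by rw [Real.norm_eq_abs]
          _ ≤ 1 ^ 2 := by apply pow_le_pow_left₀ (abs_nonneg _) this
          _ = 1 := one_pow 2
    _ = n := by simp

lemma Ico_scale {a t u : ℝ} (ha : 0 < a) :
    (0 ≤ a * t - u ∧ a * t - u < 1) ↔ (u / a ≤ t ∧ t < (u + 1) / a) := by
  rw [div_le_iff₀ ha, lt_div_iff₀ ha]
  constructor <;> intro h <;> constructor <;> nlinarith [h.1, h.2]

lemma volume_cube {n : ℕ} (j' : ℤ) (k' : Fin n → ℤ) :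
    volume {y : EuclideanSpace ℝ (Fin n) | (2:ℝ)^j' • y - intPt n k' ∈ unitCube n}
      = ENNReal.ofReal ((2:ℝ)^(-j')) ^ n := by
  have h2 : (0:ℝ) < (2:ℝ)^j' := zpow_pos (by norm_num) _
  have hset : {y : EuclideanSpace ℝ (Fin n) | (2:ℝ)^j' • y - intPt n k' ∈ unitCube n}
      = (WithLp.equiv 2 (Fin n → ℝ)) ⁻¹'
        (Set.univ.pi fun i => Set.Ico ((k' i : ℝ) / (2:ℝ)^j') (((k' i : ℝ) + 1) / (2:ℝ)^j')) := by
    ext y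
    simp only [Set.mem_setOf_eq, Set.mem_preimage, Set.mem_pi, Set.mem_univ, forall_true_left,
      Set.mem_Ico, unitCube, WithLp.equiv_apply]
    have hy : ∀ i, ((2:ℝ)^j' • y - intPt n k') i = (2:ℝ)^j' * y i - k' i := fun i => rfl
    constructor
    · intro h i
      exact (Ico_scale h2).mp (by rw [← hy i]; exact h i)
    · intro h i
      rw [hy i]
      exact (Ico_scale h2).mpr (h i)
  rw [hset]
  rw [show ⇑(WithLp.equiv 2 (Fin n → ℝ)) = @WithLp.ofLp 2 (Fin n → ℝ) from rfl,
    (PiLp.volume_preserving_ofLp (Fin n)).measure_preimage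
    ((MeasurableSet.univ_pi (fun i => measurableSet_Ico)).nullMeasurableSet)]
  rw [volume_pi_pi]
  have : ∀ i : Fin n, volume (Set.Ico ((k' i : ℝ) / (2:ℝ)^j') (((k' i : ℝ) + 1) / (2:ℝ)^j'))
      = ENNReal.ofReal ((2:ℝ)^(-j')) := by
    intro i; rw [Real.volume_Ico]; congr 1
    rw [zpow_neg]
    field_simp
    ring
  simp_rw [this]
  simp

lemma measurableSet_unitCube (n : ℕ) : MeasurableSet (unitCube n) := by
  have : unitCube n = (WithLp.equiv 2 (Fin n → ℝ)) ⁻¹'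
      (Set.univ.pi fun _ => Set.Ico (0:ℝ) 1) := by
    ext y
    simp [unitCube, Set.mem_pi, WithLp.equiv_apply]
  rw [this]
  exact (MeasurableSet.univ_pi fun _ => measurableSet_Ico).preimage
    (PiLp.volume_preserving_ofLp (Fin n)).measurable

lemma measurableSet_cube {n : ℕ} (j' : ℤ) (k' : Fin n → ℤ) :
    MeasurableSet {y : EuclideanSpace ℝ (Fin n) | (2:ℝ)^j' • y - intPt n k' ∈ unitCube n} :=
  (measurableSet_unitCube n).preimage
    ((continuous_id.const_smul ((2:ℝ)^j')).sub continuous_const).measurable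

lemma cube_subset_ball {n : ℕ} {j j' : ℤ} (hjj : j < j') {k k' : Fin n → ℤ}
    {x : EuclideanSpace ℝ (Fin n)} (hx : (2:ℝ)^j • x - intPt n k ∈ unitCube n)
    {m : ℕ} (hd : ‖intPt n k - (2:ℝ)^(j-j') • intPt n k'‖ ≤ (m:ℝ)) :
    {y : EuclideanSpace ℝ (Fin n) | (2:ℝ)^j' • y - intPt n k' ∈ unitCube n}
      ⊆ Metric.ball x ((2:ℝ)^(-j) * ((1+(m:ℝ)) * (1 + 2*Real.sqrt n))) := by
  intro y hy
  set s := Real.sqrt n with hs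
  have hs0 : 0 ≤ s := Real.sqrt_nonneg _
  have h2j : (0:ℝ) < (2:ℝ)^(-j) := zpow_pos (by norm_num) _
  have h2j' : (0:ℝ) < (2:ℝ)^(-j') := zpow_pos (by norm_num) _
  have hmono : (2:ℝ)^(-j') ≤ (2:ℝ)^(-j) :=
    zpow_le_zpow_right₀ (by norm_num) (by omega)
  -- x near its cube corner
  have h1 : ‖x - (2:ℝ)^(-j) • intPt n k‖ ≤ (2:ℝ)^(-j) * s := by
    have hxe : x - (2:ℝ)^(-j) • intPt n k = (2:ℝ)^(-j) • ((2:ℝ)^j • x - intPt n k) := by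
      rw [smul_sub, smul_smul, ← zpow_add₀ (by norm_num : (2:ℝ) ≠ 0)]
      simp
    rw [hxe, norm_smul, Real.norm_eq_abs, abs_of_pos h2j]
    exact mul_le_mul_of_nonneg_left (norm_le_sqrt_of_mem_unitCube hx) h2j.le
  have h2 : ‖y - (2:ℝ)^(-j') • intPt n k'‖ ≤ (2:ℝ)^(-j) * s := by
    have hye : y - (2:ℝ)^(-j') • intPt n k' = (2:ℝ)^(-j') • ((2:ℝ)^j' • y - intPt n k') := by
      rw [smul_sub, smul_smul, ← zpow_add₀ (by norm_num : (2:ℝ) ≠ 0)]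
      simp
    rw [hye, norm_smul, Real.norm_eq_abs, abs_of_pos h2j']
    calc (2:ℝ)^(-j') * ‖(2:ℝ)^j' • y - intPt n k'‖ ≤ (2:ℝ)^(-j') * s :=
          mul_le_mul_of_nonneg_left (norm_le_sqrt_of_mem_unitCube hy) h2j'.le
      _ ≤ (2:ℝ)^(-j) * s := mul_le_mul_of_nonneg_right hmono hs0
  have h3 : ‖(2:ℝ)^(-j) • intPt n k - (2:ℝ)^(-j') • intPt n k'‖ ≤ (2:ℝ)^(-j) * (m:ℝ) := by
    have he : (2:ℝ)^(-j) • intPt n k - (2:ℝ)^(-j') • intPt n k'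
        = (2:ℝ)^(-j) • (intPt n k - (2:ℝ)^(j-j') • intPt n k') := by
      rw [smul_sub, smul_smul, ← zpow_add₀ (by norm_num : (2:ℝ) ≠ 0)]
      ring_nf
    rw [he, norm_smul, Real.norm_eq_abs, abs_of_pos h2j]
    exact mul_le_mul_of_nonneg_left hd h2j.le
  rw [Metric.mem_ball, dist_eq_norm]
  have hdecomp : y - x = (y - (2:ℝ)^(-j') • intPt n k')
      + ((2:ℝ)^(-j') • intPt n k' - (2:ℝ)^(-j) • intPt n k)
      + ((2:ℝ)^(-j) • intPt n k - x) := by abel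
  calc ‖y - x‖ ≤ ‖y - (2:ℝ)^(-j') • intPt n k'‖
        + ‖(2:ℝ)^(-j') • intPt n k' - (2:ℝ)^(-j) • intPt n k‖
        + ‖(2:ℝ)^(-j) • intPt n k - x‖ := by
        rw [hdecomp]; exact norm_add₃_le
    _ ≤ (2:ℝ)^(-j) * s + (2:ℝ)^(-j) * (m:ℝ) + (2:ℝ)^(-j) * s := by
        gcongr
        · rw [norm_sub_rev]; exact h3
        · rw [norm_sub_rev]; exact h1
    _ < (2:ℝ)^(-j) * ((1+(m:ℝ)) * (1 + 2*s)) := by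
        have hm0 : (0:ℝ) ≤ (m:ℝ) := Nat.cast_nonneg _
        have : s + (m:ℝ) + s < (1+(m:ℝ)) * (1 + 2*s) := by nlinarith
        nlinarith

lemma ofReal_two_zpow (a : ℤ) : ENNReal.ofReal ((2:ℝ)^a) = (2:ℝ≥0∞)^a := by
  rw [← Real.rpow_intCast 2 a, ← ENNReal.ofReal_rpow_of_pos two_pos,
    ENNReal.ofReal_ofNat, ENNReal.rpow_intCast]

lemma shell_sum_le {n : ℕ} (hn : 1 ≤ n) (c : (Fin n → ℤ) → NNReal) {j j' : ℤ} (hjj : j < j')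
    (k : Fin n → ℤ) (x : EuclideanSpace ℝ (Fin n))
    (hx : (2:ℝ)^j • x - intPt n k ∈ unitCube n) (m : ℕ) :
    (∑' k' : Fin n → ℤ, if ‖intPt n k - (2:ℝ)^(j-j') • intPt n k'‖ ≤ (m:ℝ)
        then (c k' : ℝ≥0∞) else 0)
      ≤ ENNReal.ofReal ((1+2*Real.sqrt n)^n)
        * volume (Metric.ball (0:EuclideanSpace ℝ (Fin n)) 1)
        * ENNReal.ofReal ((1+(m:ℝ))^n)
        * ((2:ℝ≥0∞)^(j'-j))^n
        * maxFn n (waveletSum n c j') x := by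
  classical
  haveI : Nonempty (Fin n) := ⟨⟨0, hn⟩⟩
  haveI : Nontrivial (EuclideanSpace ℝ (Fin n)) := inferInstance
  set s := Real.sqrt n with hs
  have hs0 : 0 ≤ s := Real.sqrt_nonneg _
  set r : ℝ := (2:ℝ)^(-j) * ((1+(m:ℝ)) * (1 + 2*s)) with hrdef
  have h2j : (0:ℝ) < (2:ℝ)^(-j) := zpow_pos (by norm_num) _
  have hr : 0 < r := by
    apply mul_pos h2j
    have : (0:ℝ) ≤ (m:ℝ) := Nat.cast_nonneg _
    nlinarith
  set B := Metric.ball x r with hB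
  set Q : (Fin n → ℤ) → Set (EuclideanSpace ℝ (Fin n)) :=
    fun k' => {y | (2:ℝ)^j' • y - intPt n k' ∈ unitCube n} with hQ
  set Mf := maxFn n (waveletSum n c j') x with hMf
  -- integral identity
  have hint : ∫⁻ y in B, waveletSum n c j' y = ∑' k', (c k' : ℝ≥0∞) * volume (Q k' ∩ B) := by
    unfold waveletSum
    have hic : ∀ (k' : Fin n → ℤ) (y : EuclideanSpace ℝ (Fin n)),
        (unitCube n).indicator (1 : EuclideanSpace ℝ (Fin n) → ℝ≥0∞) ((2:ℝ)^j' • y - intPt n k')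
          = (Q k').indicator (1 : EuclideanSpace ℝ (Fin n) → ℝ≥0∞) y := by
      intro k' y
      simp only [Set.indicator_apply, hQ, Set.mem_setOf_eq, Pi.one_apply]
    simp_rw [hic]
    rw [lintegral_tsum (fun k' => ((measurable_one.indicator
      (measurableSet_cube j' k')).const_mul _).aemeasurable)]
    congr 1; ext k'
    rw [lintegral_const_mul _ (measurable_one.indicator (measurableSet_cube j' k'))]
    congr 1
    rw [lintegral_indicator_one (measurableSet_cube j' k'),
      Measure.restrict_apply (measurableSet_cube j' k')]
  -- lower bound for the integral
  have hIge : (∑' k', if ‖intPt n k - (2:ℝ)^(j-j') • intPt n k'‖ ≤ (m:ℝ)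
        then (c k' : ℝ≥0∞) else 0) * ENNReal.ofReal ((2:ℝ)^(-j')) ^ n
      ≤ ∫⁻ y in B, waveletSum n c j' y := by
    rw [hint, ← ENNReal.tsum_mul_right]
    apply ENNReal.tsum_le_tsum
    intro k'
    by_cases hd : ‖intPt n k - (2:ℝ)^(j-j') • intPt n k'‖ ≤ (m:ℝ)
    · rw [if_pos hd]
      have hsub : Q k' ⊆ B := cube_subset_ball hjj hx hd
      rw [Set.inter_eq_self_of_subset_left hsub, volume_cube]
    · rw [if_neg hd]; simp
  -- maximal function bound
  have h0 : volume B ≠ 0 := (Metric.measure_ball_pos volume x hr).ne'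
  have htop : volume B ≠ ⊤ := measure_ball_lt_top.ne
  have hmax : ∫⁻ y in B, waveletSum n c j' y ≤ Mf * volume B := by
    have hdiv : (∫⁻ y in B, waveletSum n c j' y) / volume B ≤ Mf :=
      le_iSup₂ (f := fun r (_ : 0 < r) =>
        (∫⁻ y in Metric.ball x r, waveletSum n c j' y) / volume (Metric.ball x r)) r hr
    exact (ENNReal.div_le_iff h0 htop).mp hdiv
  have hvol : volume B = ENNReal.ofReal (r^n) * volume (Metric.ball (0:EuclideanSpace ℝ (Fin n)) 1) := by
    rw [hB, Measure.addHaar_ball volume x hr.le, finrank_euclideanSpace_fin]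
  -- putting it together
  have key : (∑' k', if ‖intPt n k - (2:ℝ)^(j-j') • intPt n k'‖ ≤ (m:ℝ)
        then (c k' : ℝ≥0∞) else 0) * ((2:ℝ≥0∞)^(-j')) ^ n
      ≤ Mf * (((2:ℝ≥0∞)^(-j))^n * ENNReal.ofReal ((1+(m:ℝ))^n)
          * ENNReal.ofReal ((1+2*s)^n)
          * volume (Metric.ball (0:EuclideanSpace ℝ (Fin n)) 1)) := by
    have hrn : ENNReal.ofReal (r^n) = ((2:ℝ≥0∞)^(-j))^n * ENNReal.ofReal ((1+(m:ℝ))^n)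
        * ENNReal.ofReal ((1+2*s)^n) := by
      have hm0 : (0:ℝ) ≤ 1+(m:ℝ) := by positivity
      rw [hrdef, mul_pow, mul_pow,
        ENNReal.ofReal_mul (by positivity), ENNReal.ofReal_mul (by positivity),
        ENNReal.ofReal_pow h2j.le, ofReal_two_zpow, mul_assoc]
    calc (∑' k', if ‖intPt n k - (2:ℝ)^(j-j') • intPt n k'‖ ≤ (m:ℝ)
          then (c k' : ℝ≥0∞) else 0) * ((2:ℝ≥0∞)^(-j')) ^ n
        = (∑' k', if ‖intPt n k - (2:ℝ)^(j-j') • intPt n k'‖ ≤ (m:ℝ)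
          then (c k' : ℝ≥0∞) else 0) * ENNReal.ofReal ((2:ℝ)^(-j')) ^ n := by
          rw [ofReal_two_zpow]
      _ ≤ ∫⁻ y in B, waveletSum n c j' y := hIge
      _ ≤ Mf * volume B := hmax
      _ = Mf * (((2:ℝ≥0∞)^(-j))^n * ENNReal.ofReal ((1+(m:ℝ))^n)
          * ENNReal.ofReal ((1+2*s)^n)
          * volume (Metric.ball (0:EuclideanSpace ℝ (Fin n)) 1)) := by
          rw [hvol, hrn]
  have key2 := mul_le_mul_left key (((2:ℝ≥0∞)^(j')) ^ n)
  have hone : ((2:ℝ≥0∞)^(-j'))^n * ((2:ℝ≥0∞)^(j'))^n = 1 := by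
    rw [← mul_pow, ← ENNReal.zpow_add (by norm_num) (by norm_num)]
    simp
  rw [mul_assoc, hone, mul_one] at key2
  refine key2.trans (le_of_eq ?_)
  have hmerge : ((2:ℝ≥0∞)^(-j))^n * ((2:ℝ≥0∞)^(j'))^n = ((2:ℝ≥0∞)^(j'-j))^n := by
    rw [← mul_pow, ← ENNReal.zpow_add (by norm_num) (by norm_num)]
    congr 1
    rw [neg_add_eq_sub]
  calc Mf * (((2:ℝ≥0∞)^(-j))^n * ENNReal.ofReal ((1+(m:ℝ))^n) * ENNReal.ofReal ((1+2*s)^n)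
        * volume (Metric.ball (0:EuclideanSpace ℝ (Fin n)) 1)) * ((2:ℝ≥0∞)^(j'))^n
      = (((2:ℝ≥0∞)^(-j))^n * ((2:ℝ≥0∞)^(j'))^n) * ENNReal.ofReal ((1+2*s)^n)
        * volume (Metric.ball (0:EuclideanSpace ℝ (Fin n)) 1)
        * ENNReal.ofReal ((1+(m:ℝ))^n) * Mf := by ring
    _ = ENNReal.ofReal ((1+2*s)^n) * volume (Metric.ball (0:EuclideanSpace ℝ (Fin n)) 1)
        * ENNReal.ofReal ((1+(m:ℝ))^n) * ((2:ℝ≥0∞)^(j'-j))^n * Mf := by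
        rw [hmerge]; ring

lemma ofReal_rpow_neg_le (N : ℝ) (hN : 0 ≤ N) {d : ℝ} (hd : 0 ≤ d) :
    ENNReal.ofReal ((1 + d) ^ (-N)) ≤ ENNReal.ofReal ((3:ℝ) ^ (N+1)) *
      ∑' m : ℕ, (if d ≤ (m:ℝ) then ENNReal.ofReal ((1 + (m:ℝ)) ^ (-(N+1))) else 0) := by
  classical
  set a : ℕ := ⌈d⌉₊ with ha
  have had : d ≤ (a:ℝ) := Nat.le_ceil d
  have ha1 : (a:ℝ) < d + 1 := Nat.ceil_lt_add_one hd
  have h1d : (0:ℝ) < 1 + d := by linarith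
  have hterm : ∀ m ∈ Finset.Ico a (2*a+1),
      ENNReal.ofReal ((3*(1+d)) ^ (-(N+1)))
        ≤ (if d ≤ (m:ℝ) then ENNReal.ofReal ((1 + (m:ℝ)) ^ (-(N+1))) else 0) := by
    intro m hm
    rw [Finset.mem_Ico] at hm
    have hm1 : (a:ℝ) ≤ (m:ℝ) := by exact_mod_cast hm.1
    have hdm : d ≤ (m:ℝ) := had.trans hm1
    rw [if_pos hdm]
    apply ENNReal.ofReal_le_ofReal
    apply Real.rpow_le_rpow_of_nonpos (by positivity) ?_ (by linarith)
    have hm2 : (m:ℝ) ≤ 2*(a:ℝ) := by exact_mod_cast Nat.lt_succ_iff.mp hm.2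
    nlinarith
  have hcard : (Finset.Ico a (2*a+1)).card = a + 1 := by
    rw [Nat.card_Ico]; omega
  have hsum : (a+1) • ENNReal.ofReal ((3*(1+d)) ^ (-(N+1)))
      ≤ ∑ m ∈ Finset.Ico a (2*a+1),
        (if d ≤ (m:ℝ) then ENNReal.ofReal ((1 + (m:ℝ)) ^ (-(N+1))) else 0) := by
    rw [← hcard]
    exact Finset.card_nsmul_le_sum _ _ _ hterm
  have hfin : ∑ m ∈ Finset.Ico a (2*a+1),
        (if d ≤ (m:ℝ) then ENNReal.ofReal ((1 + (m:ℝ)) ^ (-(N+1))) else 0)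
      ≤ ∑' m : ℕ, (if d ≤ (m:ℝ) then ENNReal.ofReal ((1 + (m:ℝ)) ^ (-(N+1))) else 0) :=
    ENNReal.sum_le_tsum _
  have hmain : ENNReal.ofReal ((1 + d) ^ (-N))
      ≤ ENNReal.ofReal ((3:ℝ) ^ (N+1)) * ((a+1) • ENNReal.ofReal ((3*(1+d)) ^ (-(N+1)))) := by
    rw [nsmul_eq_mul]
    rw [← ENNReal.ofReal_natCast (a+1), ← ENNReal.ofReal_mul (by positivity),
      ← ENNReal.ofReal_mul (by positivity)]
    apply ENNReal.ofReal_le_ofReal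
    have hsplit : (3*(1+d)) ^ (-(N+1)) = (3:ℝ) ^ (-(N+1)) * (1+d) ^ (-(N+1)) :=
      Real.mul_rpow (by norm_num) h1d.le
    have h3 : (3:ℝ) ^ (N+1) * (3:ℝ) ^ (-(N+1)) = 1 := by
      rw [← Real.rpow_add (by norm_num : (0:ℝ) < 3)]
      have he : N + 1 + -(N+1) = 0 := by ring
      rw [he, Real.rpow_zero]
    have hpow : (1+d) * (1+d) ^ (-(N+1)) = (1+d) ^ (-N) := by
      nth_rewrite 1 [← Real.rpow_one (1+d)]
      rw [← Real.rpow_add h1d]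
      congr 1; ring
    have hcast : (1+d : ℝ) ≤ ((a+1 : ℕ):ℝ) := by push_cast; linarith
    calc (1 + d) ^ (-N) = (1+d) * (1+d) ^ (-(N+1)) := hpow.symm
      _ ≤ ((a+1:ℕ):ℝ) * (1+d) ^ (-(N+1)) :=
          mul_le_mul_of_nonneg_right hcast (Real.rpow_nonneg h1d.le _)
      _ = (3:ℝ)^(N+1) * (((a+1:ℕ):ℝ) * (3*(1+d)) ^ (-(N+1))) := by
          rw [hsplit]
          linear_combination (-(((a+1:ℕ):ℝ) * (1+d) ^ (-(N+1)))) * h3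
  calc ENNReal.ofReal ((1 + d) ^ (-N))
      ≤ ENNReal.ofReal ((3:ℝ) ^ (N+1)) * ((a+1) • ENNReal.ofReal ((3*(1+d)) ^ (-(N+1)))) := hmain
    _ ≤ _ := mul_le_mul_right (hsum.trans hfin) _

lemma tsum_weight_ne_top (n : ℕ) (N : ℝ) (hnN : (n:ℝ) < N) :
    (∑' m : ℕ, ENNReal.ofReal ((1+(m:ℝ))^(-(N+1))) * ENNReal.ofReal ((1+(m:ℝ))^(n:ℕ))) ≠ ⊤ := by
  have hcomb : ∀ m : ℕ, ENNReal.ofReal ((1+(m:ℝ))^(-(N+1))) * ENNReal.ofReal ((1+(m:ℝ))^(n:ℕ))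
      = ENNReal.ofReal ((1+(m:ℝ))^((n:ℝ)-(N+1))) := by
    intro m
    have h1m : (0:ℝ) < 1 + (m:ℝ) := by positivity
    rw [← ENNReal.ofReal_mul (Real.rpow_nonneg h1m.le _)]
    congr 1
    rw [← Real.rpow_natCast (1+(m:ℝ)) n, ← Real.rpow_add h1m]
    congr 1; ring
  simp_rw [hcomb]
  have hp : ((n:ℝ)-(N+1)) < -1 := by linarith
  have hsummable : Summable (fun m : ℕ => (1+(m:ℝ))^((n:ℝ)-(N+1))) := by
    have hbase : Summable (fun m : ℕ => ((m:ℝ))^((n:ℝ)-(N+1))) :=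
      Real.summable_nat_rpow.mpr hp
    have := (summable_nat_add_iff 1).mpr hbase
    apply this.congr
    intro m
    congr 1
    push_cast; ring
  rw [← ENNReal.ofReal_tsum_of_nonneg (fun m => Real.rpow_nonneg (by positivity) _) hsummable]
  exact ENNReal.ofReal_ne_top

/-- Lemma 2.6, case `j < j'`: for `N > 2n+1` there is `C = C(n, N) > 0` such that for
`j < j'`, `k ∈ ℤⁿ` and `x` with `2^j x - k ∈ [0,1)ⁿ`,
`∑_{k'} c(k') (1+‖k - 2^{j-j'} k'‖)^{-N} ≤ C · 2^{n(j'-j)} · M f_{j'}(x)`. -/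
theorem sum_le_maximal_of_lt (n : ℕ) (hn : 1 ≤ n) (N : ℝ) (hN : 2 * (n : ℝ) + 1 < N) :
    ∃ C : ℝ, 0 < C ∧
      ∀ (c : (Fin n → ℤ) → NNReal) (j j' : ℤ), j < j' →
        ∀ (k : Fin n → ℤ) (x : EuclideanSpace ℝ (Fin n)),
          (2 : ℝ) ^ j • x - intPt n k ∈ unitCube n →
          (∑' k' : Fin n → ℤ, (c k' : ℝ≥0∞) *
              ENNReal.ofReal ((1 + ‖intPt n k - (2 : ℝ) ^ (j - j') • intPt n k'‖) ^ (-N)))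
            ≤ ENNReal.ofReal C * (2 : ℝ≥0∞) ^ ((n : ℝ) * ((j' : ℝ) - (j : ℝ))) *
                maxFn n (waveletSum n c j') x := by
  classical
  have hn1 : (1:ℝ) ≤ (n:ℝ) := by exact_mod_cast hn
  have hN0 : 0 ≤ N := by linarith
  set v1 := volume (Metric.ball (0:EuclideanSpace ℝ (Fin n)) 1) with hv1
  set A : ℝ≥0∞ := ENNReal.ofReal ((1+2*Real.sqrt n)^n) * v1 with hA
  set T : ℝ≥0∞ := ∑' m:ℕ, ENNReal.ofReal ((1+(m:ℝ))^(-(N+1))) * ENNReal.ofReal ((1+(m:ℝ))^(n:ℕ))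
    with hT
  have hTne : T ≠ ⊤ := tsum_weight_ne_top n N (by linarith)
  have hAne : A ≠ ⊤ := ENNReal.mul_ne_top ENNReal.ofReal_ne_top measure_ball_lt_top.ne
  set Etot : ℝ≥0∞ := ENNReal.ofReal ((3:ℝ)^(N+1)) * (A * T) with hEtot
  have hEne : Etot ≠ ⊤ := ENNReal.mul_ne_top ENNReal.ofReal_ne_top (ENNReal.mul_ne_top hAne hTne)
  refine ⟨Etot.toReal + 1, by positivity, ?_⟩
  intro c j j' hjj k x hx
  set Mf := maxFn n (waveletSum n c j') x with hMf
  set P : ℝ≥0∞ := ((2:ℝ≥0∞)^(j'-j))^n with hP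
  have hpow : (2:ℝ≥0∞) ^ ((n : ℝ) * ((j' : ℝ) - (j : ℝ))) = P := by
    rw [hP, mul_comm, ENNReal.rpow_mul]
    have h1 : ((j':ℝ) - (j:ℝ)) = ((j'-j : ℤ):ℝ) := by push_cast; ring
    rw [h1, ENNReal.rpow_intCast, ENNReal.rpow_natCast]
  set d : (Fin n → ℤ) → ℝ := fun k' => ‖intPt n k - (2:ℝ)^(j-j') • intPt n k'‖ with hd
  set w : ℕ → ℝ≥0∞ := fun m => ENNReal.ofReal ((1 + (m:ℝ)) ^ (-(N+1))) with hw
  set P3 : ℝ≥0∞ := ENNReal.ofReal ((3:ℝ)^(N+1)) with hP3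
  have step1 : (∑' k' : Fin n → ℤ, (c k' : ℝ≥0∞) *
      ENNReal.ofReal ((1 + d k') ^ (-N)))
      ≤ ∑' k' : Fin n → ℤ, (c k' : ℝ≥0∞) * (P3 * ∑' m : ℕ, if d k' ≤ (m:ℝ) then w m else 0) := by
    apply ENNReal.tsum_le_tsum
    intro k'
    exact mul_le_mul_right (ofReal_rpow_neg_le N hN0 (norm_nonneg _)) _
  have step2 : (∑' k' : Fin n → ℤ, (c k' : ℝ≥0∞) * (P3 * ∑' m : ℕ, if d k' ≤ (m:ℝ) then w m else 0))
      = P3 * ∑' m : ℕ, w m * ∑' k' : Fin n → ℤ, (if d k' ≤ (m:ℝ) then (c k' : ℝ≥0∞) else 0) := by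
    calc ∑' k' : Fin n → ℤ, (c k' : ℝ≥0∞) * (P3 * ∑' m : ℕ, if d k' ≤ (m:ℝ) then w m else 0)
        = ∑' k' : Fin n → ℤ, P3 * ∑' m : ℕ, (if d k' ≤ (m:ℝ) then (c k' : ℝ≥0∞) * w m else 0) := by
          apply tsum_congr
          intro k'
          rw [← mul_assoc, mul_comm ((c k' : ℝ≥0∞)) P3, mul_assoc, ← ENNReal.tsum_mul_left]
          congr 1
          apply tsum_congr
          intro m
          rw [mul_ite, mul_zero]
      _ = P3 * ∑' k' : Fin n → ℤ, ∑' m : ℕ, (if d k' ≤ (m:ℝ) then (c k' : ℝ≥0∞) * w m else 0) := by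
          rw [ENNReal.tsum_mul_left]
      _ = P3 * ∑' m : ℕ, ∑' k' : Fin n → ℤ, (if d k' ≤ (m:ℝ) then (c k' : ℝ≥0∞) * w m else 0) := by
          rw [ENNReal.tsum_comm]
      _ = P3 * ∑' m : ℕ, w m * ∑' k' : Fin n → ℤ, (if d k' ≤ (m:ℝ) then (c k' : ℝ≥0∞) else 0) := by
          congr 1
          apply tsum_congr
          intro m
          rw [← ENNReal.tsum_mul_left]
          apply tsum_congr
          intro k'
          rw [mul_ite, mul_zero, mul_comm (w m)]
  have step3 : ∑' m : ℕ, w m * ∑' k' : Fin n → ℤ, (if d k' ≤ (m:ℝ) then (c k' : ℝ≥0∞) else 0)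
      ≤ T * (A * P * Mf) := by
    rw [hT, ← ENNReal.tsum_mul_right]
    apply ENNReal.tsum_le_tsum
    intro m
    have hshell := shell_sum_le hn c hjj k x hx m
    calc w m * ∑' k' : Fin n → ℤ, (if d k' ≤ (m:ℝ) then (c k' : ℝ≥0∞) else 0)
        ≤ w m * (ENNReal.ofReal ((1+2*Real.sqrt n)^n) * v1 * ENNReal.ofReal ((1+(m:ℝ))^n)
            * ((2:ℝ≥0∞)^(j'-j))^n * Mf) := mul_le_mul_right hshell _
      _ = ENNReal.ofReal ((1+(m:ℝ))^(-(N+1))) * ENNReal.ofReal ((1+(m:ℝ))^(n:ℕ))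
            * (A * P * Mf) := by
          rw [hw, hA, hP]; ring
  have hEle : Etot ≤ ENNReal.ofReal (Etot.toReal + 1) := by
    conv_lhs => rw [← ENNReal.ofReal_toReal hEne]
    exact ENNReal.ofReal_le_ofReal (by linarith)
  calc (∑' k' : Fin n → ℤ, (c k' : ℝ≥0∞) * ENNReal.ofReal ((1 + d k') ^ (-N)))
      ≤ ∑' k' : Fin n → ℤ, (c k' : ℝ≥0∞) * (P3 * ∑' m : ℕ, if d k' ≤ (m:ℝ) then w m else 0) :=
        step1
    _ = P3 * ∑' m : ℕ, w m * ∑' k' : Fin n → ℤ, (if d k' ≤ (m:ℝ) then (c k' : ℝ≥0∞) else 0) :=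
        step2
    _ ≤ P3 * (T * (A * P * Mf)) := mul_le_mul_right step3 _
    _ = Etot * P * Mf := by rw [hEtot]; ring
    _ ≤ ENNReal.ofReal (Etot.toReal + 1) * P * Mf :=
        mul_le_mul_left (mul_le_mul_left hEle _) _
    _ = ENNReal.ofReal (Etot.toReal + 1) * (2:ℝ≥0∞) ^ ((n : ℝ) * ((j' : ℝ) - (j : ℝ))) * Mf := by
        rw [hpow]
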